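/- Let Σ be the fan in ℚ³ consisting of the three cones σ, ε(σ), ε²(σ) and all of their faces, with σ and ε as above. Then Σ is not quasi-projective: there is no family (l₁, l₂, l₃) of linear forms on ℚ³, indexed by the maximal cones σ₁ = σ, σ₂ = ε(σ), σ₃ = ε²(σ) of Σ, such that lᵢ = lⱼ on σᵢ ∩ σⱼ for all i, j and lᵢ(x) > lⱼ(x) for all i ≠ j and every x ∈ σᵢ with x ∉ σⱼ. -/

import Mathlib

open Pointwise

/-- The cone generated by a finite family of vectors: all nonnegative
rational linear combinations of the `g i`. -/
def coneGen {V : Type*} [AddCommGroup V] [Module ℚ V] {n : ℕ} (g : Fin n → V) : Set V :=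
  {x | ∃ c : Fin n → ℚ, (∀ i, 0 ≤ c i) ∧ x = ∑ i, c i • g i}

/-- A set is a cone if it is the cone generated by some finite family of vectors. -/
def IsCone {V : Type*} [AddCommGroup V] [Module ℚ V] (C : Set V) : Prop :=
  ∃ (n : ℕ) (g : Fin n → V), C = coneGen g

/-- `F` is a face of the cone `C` if `F = C ∩ l⁻¹(0)` for some linear form `l`
nonnegative on `C`. -/
def IsFaceOf {V : Type*} [AddCommGroup V] [Module ℚ V] (F C : Set V) : Prop :=
  ∃ l : V →ₗ[ℚ] ℚ, (∀ x ∈ C, 0 ≤ l x) ∧ F = C ∩ {x | l x = 0}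

/-- A fan: a finite collection of strictly convex cones, closed under taking faces,
such that the intersection of any two of its cones is a face of each. -/
def IsFan {V : Type*} [AddCommGroup V] [Module ℚ V] (S : Set (Set V)) : Prop :=
  S.Finite ∧
  (∀ C ∈ S, IsCone C ∧ C ∩ (-C) = ({0} : Set V)) ∧
  (∀ C ∈ S, ∀ F : Set V, IsFaceOf F C → F ∈ S) ∧
  (∀ C ∈ S, ∀ C' ∈ S, IsFaceOf (C ∩ C') C ∧ IsFaceOf (C ∩ C') C')

/-- A cone of the collection `S` is maximal if it is not strictly contained in
another cone of `S`. -/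
def IsMaximalIn {V : Type*} [AddCommGroup V] [Module ℚ V] (S : Set (Set V)) (C : Set V) : Prop :=
  C ∈ S ∧ ∀ C' ∈ S, C ⊆ C' → C' = C

/-- A fan is quasi-projective if there is a family of linear forms indexed by its
maximal cones which agree on pairwise intersections and satisfy the strict
inequality condition. -/
def IsQuasiProjectiveFan {V : Type*} [AddCommGroup V] [Module ℚ V] (S : Set (Set V)) : Prop :=
  ∃ l : Set V → (V →ₗ[ℚ] ℚ),
    (∀ C, IsMaximalIn S C → ∀ C', IsMaximalIn S C' → ∀ x ∈ C ∩ C', l C x = l C' x) ∧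
    (∀ C, IsMaximalIn S C → ∀ C', IsMaximalIn S C' → C ≠ C' →
      ∀ x ∈ C, x ∉ C' → l C' x < l C x)

/-- The generators `5u+v−5w`, `−5u−5v+14w`, `4u−v` of the cone `σ`. -/
def genS : Fin 3 → (Fin 3 → ℚ) := ![![5, 1, -5], ![-5, -5, 14], ![4, -1, 0]]

/-- The cone `σ = Cone(5u+v−5w, −5u−5v+14w, 4u−v)` in `ℚ³`. -/
def coneSigma : Set (Fin 3 → ℚ) := coneGen genS

/-- The matrix of `ε` in the standard basis `(u, v, w)`:
`ε(u) = v`, `ε(v) = −u−v`, `ε(w) = w`. -/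
def epsMat : Matrix (Fin 3) (Fin 3) ℚ := ![![0, -1, 0], ![1, -1, 0], ![0, 0, 1]]

/-- The linear automorphism `ε : ℚ³ → ℚ³`. -/
def eps : (Fin 3 → ℚ) →ₗ[ℚ] (Fin 3 → ℚ) := Matrix.toLin' epsMat

/-- The fan `Σ` consisting of `σ`, `ε(σ)`, `ε²(σ)` and all of their faces. -/
def fanSigma : Set (Set (Fin 3 → ℚ)) :=
  {coneSigma, ⇑eps '' coneSigma, ⇑eps '' (⇑eps '' coneSigma)} ∪
    {C | IsFaceOf C coneSigma ∨ IsFaceOf C (⇑eps '' coneSigma) ∨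
      IsFaceOf C (⇑eps '' (⇑eps '' coneSigma))}

/-- The three maximal cones `σ₁ = σ`, `σ₂ = ε(σ)`, `σ₃ = ε²(σ)` of `Σ`. -/
def threeCones : Fin 3 → Set (Fin 3 → ℚ) :=
  ![coneSigma, ⇑eps '' coneSigma, ⇑eps '' (⇑eps '' coneSigma)]
section Aux

/-- Linear form given by a coefficient vector. -/
def lform (n : Fin 3 → ℚ) : (Fin 3 → ℚ) →ₗ[ℚ] ℚ where
  toFun x := n 0 * x 0 + n 1 * x 1 + n 2 * x 2
  map_add' x y := by simp [Pi.add_apply]; ring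
  map_smul' c x := by simp [Pi.smul_apply]; ring

lemma lform_apply (n x : Fin 3 → ℚ) :
    lform n x = n 0 * x 0 + n 1 * x 1 + n 2 * x 2 := rfl

lemma not_mem_coneGen (n : Fin 3 → ℚ) (g : Fin 3 → (Fin 3 → ℚ))
    (hg : ∀ i, 0 ≤ lform n (g i)) (x : Fin 3 → ℚ) (hx : lform n x < 0) :
    x ∉ coneGen g := by
  rintro ⟨c, hc, rfl⟩
  have h : lform n (∑ i, c i • g i) = ∑ i, c i * lform n (g i) := by
    rw [map_sum]; congr 1; funext i; rw [map_smul]; rfl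
  rw [h, Fin.sum_univ_three] at hx
  nlinarith [mul_nonneg (hc 0) (hg 0), mul_nonneg (hc 1) (hg 1), mul_nonneg (hc 2) (hg 2)]

lemma image_coneGen (f : (Fin 3 → ℚ) →ₗ[ℚ] (Fin 3 → ℚ)) {n : ℕ} (g : Fin n → (Fin 3 → ℚ)) :
    ⇑f '' coneGen g = coneGen (⇑f ∘ g) := by
  ext x
  constructor
  · rintro ⟨y, ⟨c, hc, rfl⟩, rfl⟩
    exact ⟨c, hc, by rw [map_sum]; simp [map_smul]⟩
  · rintro ⟨c, hc, rfl⟩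
    exact ⟨∑ i, c i • g i, ⟨c, hc, rfl⟩, by rw [map_sum]; simp [map_smul]⟩

def genS2 : Fin 3 → (Fin 3 → ℚ) := ![![-1, 4, -5], ![5, 0, 14], ![1, 5, 0]]
def genS3 : Fin 3 → (Fin 3 → ℚ) := ![![-4, -5, -5], ![0, 5, 14], ![-5, -4, 0]]

lemma eps_apply (x : Fin 3 → ℚ) : eps x = ![-(x 1), x 0 - x 1, x 2] := by
  rw [eps, Matrix.toLin'_apply]
  funext j
  fin_cases j <;>
    simp [eps, epsMat, Matrix.toLin'_apply, Matrix.mulVec, dotProduct,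
      Fin.sum_univ_three, Matrix.cons_val_two]; ring

lemma tc1 : (⇑eps '' coneSigma) = coneGen genS2 := by
  rw [coneSigma, image_coneGen]
  have h : ⇑eps ∘ genS = genS2 := by
    funext i
    fin_cases i <;>
      (rw [Function.comp_apply, eps_apply]; funext j; fin_cases j <;> norm_num [genS, genS2, Matrix.cons_val_two])
  rw [h]

lemma tc2 : (⇑eps '' (⇑eps '' coneSigma)) = coneGen genS3 := by
  rw [tc1, image_coneGen]
  have h : ⇑eps ∘ genS2 = genS3 := by
    funext i
    fin_cases i <;>
      (rw [Function.comp_apply, eps_apply]; funext j; fin_cases j <;> norm_num [genS2, genS3, Matrix.cons_val_two])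
  rw [h]

end Aux
section Facts

def P1 : Fin 3 → ℚ := ![5, 1, -5]
def P2 : Fin 3 → ℚ := ![5, 0, 14]
def P3 : Fin 3 → ℚ := ![-1, 4, -5]
def P5 : Fin 3 → ℚ := ![0, 5, 14]
def P6 : Fin 3 → ℚ := ![-5, -5, 14]
def P7 : Fin 3 → ℚ := ![-4, -5, -5]

lemma mem_gen (g : Fin 3 → (Fin 3 → ℚ)) (i : Fin 3) : g i ∈ coneGen g := by
  refine ⟨fun j => if j = i then 1 else 0, fun j => by positivity, ?_⟩
  fin_cases i <;> simp [Fin.sum_univ_three]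

lemma hP1mem : P1 ∈ coneSigma := by
  have := mem_gen genS 0; rwa [show genS 0 = P1 by funext j; fin_cases j <;> norm_num [genS, P1]] at this
lemma hP6mem : P6 ∈ coneSigma := by
  have := mem_gen genS 1; rwa [show genS 1 = P6 by funext j; fin_cases j <;> norm_num [genS, P6]] at this
lemma hP3mem : P3 ∈ coneGen genS2 := by
  have := mem_gen genS2 0; rwa [show genS2 0 = P3 by funext j; fin_cases j <;> norm_num [genS2, P3]] at this
lemma hP2mem : P2 ∈ coneGen genS2 := by
  have := mem_gen genS2 1; rwa [show genS2 1 = P2 by funext j; fin_cases j <;> norm_num [genS2, P2]] at this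
lemma hP7mem : P7 ∈ coneGen genS3 := by
  have := mem_gen genS3 0; rwa [show genS3 0 = P7 by funext j; fin_cases j <;> norm_num [genS3, P7]] at this
lemma hP5mem : P5 ∈ coneGen genS3 := by
  have := mem_gen genS3 1; rwa [show genS3 1 = P5 by funext j; fin_cases j <;> norm_num [genS3, P5]] at this

lemma hP2not : P2 ∉ coneSigma := by
  apply not_mem_coneGen ![-11, -45, -20]
  · intro i; fin_cases i <;> norm_num [lform_apply, genS, Matrix.cons_val_two]
  · norm_num [lform_apply, P2, Matrix.cons_val_two]
lemma hP7not : P7 ∉ coneSigma := by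
  apply not_mem_coneGen ![5, 20, 9]
  · intro i; fin_cases i <;> norm_num [lform_apply, genS, Matrix.cons_val_two]
  · norm_num [lform_apply, P7, Matrix.cons_val_two]
lemma hP1not : P1 ∉ coneGen genS2 := by
  apply not_mem_coneGen ![-25, 5, 9]
  · intro i; fin_cases i <;> norm_num [lform_apply, genS2, Matrix.cons_val_two]
  · norm_num [lform_apply, P1, Matrix.cons_val_two]
lemma hP5not : P5 ∉ coneGen genS2 := by
  apply not_mem_coneGen ![56, -11, -20]
  · intro i; fin_cases i <;> norm_num [lform_apply, genS2, Matrix.cons_val_two]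
  · norm_num [lform_apply, P5, Matrix.cons_val_two]
lemma hP3not : P3 ∉ coneGen genS3 := by
  apply not_mem_coneGen ![20, -25, 9]
  · intro i; fin_cases i <;> norm_num [lform_apply, genS3, Matrix.cons_val_two]
  · norm_num [lform_apply, P3, Matrix.cons_val_two]
lemma hP2not3 : P2 ∉ coneGen genS3 := by
  apply not_mem_coneGen ![-45, 56, -20]
  · intro i; fin_cases i <;> norm_num [lform_apply, genS3, Matrix.cons_val_two]
  · norm_num [lform_apply, P2, Matrix.cons_val_two]
lemma hP6not : P6 ∉ coneGen genS3 := by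
  apply not_mem_coneGen ![-45, 56, -20]
  · intro i; fin_cases i <;> norm_num [lform_apply, genS3, Matrix.cons_val_two]
  · norm_num [lform_apply, P6, Matrix.cons_val_two]

lemma tc0' : threeCones 0 = coneSigma := rfl
lemma tc1' : threeCones 1 = coneGen genS2 := tc1
lemma tc2' : threeCones 2 = coneGen genS3 := tc2

/-- Farkas identity 1. -/
lemma key1 (f : (Fin 3 → ℚ) →ₗ[ℚ] ℚ) :
    36515 * f P1 - 24723 * f P2 + 29748 * f P6 - 22445 * f P7 = 0 := by
  have h : (36515 : ℚ) • P1 + (29748 : ℚ) • P6 = (24723 : ℚ) • P2 + (22445 : ℚ) • P7 := by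
    funext j; fin_cases j <;> norm_num [P1, P2, P6, P7]
  have h2 := congrArg f h
  rw [map_add, map_add, map_smul, map_smul, map_smul, map_smul] at h2
  simp only [smul_eq_mul] at h2
  linarith

/-- Farkas identity 2. -/
lemma key2 (f : (Fin 3 → ℚ) →ₗ[ℚ] ℚ) :
    59405 * f P3 + 23673 * f P2 - 40221 * f P5 + 29748 * f P6 - 22445 * f P7 = 0 := by
  have h : (59405 : ℚ) • P3 + (23673 : ℚ) • P2 + (29748 : ℚ) • P6
      = (40221 : ℚ) • P5 + (22445 : ℚ) • P7 := by
    funext j; fin_cases j <;> norm_num [P2, P3, P5, P6, P7]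
  have h2 := congrArg f h
  rw [map_add, map_add, map_add, map_smul, map_smul, map_smul, map_smul, map_smul] at h2
  simp only [smul_eq_mul] at h2
  linarith

/-- The core arithmetic contradiction: no family of three linear forms can satisfy
the strict inequality condition for the three maximal cones. -/
lemma core (L : Fin 3 → ((Fin 3 → ℚ) →ₗ[ℚ] ℚ))
    (h : ∀ i j : Fin 3, i ≠ j → ∀ x ∈ threeCones i, x ∉ threeCones j → L j x < L i x) :
    False := by
  have h12 : L 1 P1 < L 0 P1 := h 0 1 (by decide) P1 (by rw [tc0']; exact hP1mem) (by rw [tc1']; exact hP1not)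
  have h21 : L 0 P2 < L 1 P2 := h 1 0 (by decide) P2 (by rw [tc1']; exact hP2mem) (by rw [tc0']; exact hP2not)
  have h23 : L 2 P3 < L 1 P3 := h 1 2 (by decide) P3 (by rw [tc1']; exact hP3mem) (by rw [tc2']; exact hP3not)
  have h23' : L 2 P2 < L 1 P2 := h 1 2 (by decide) P2 (by rw [tc1']; exact hP2mem) (by rw [tc2']; exact hP2not3)
  have h32 : L 1 P5 < L 2 P5 := h 2 1 (by decide) P5 (by rw [tc2']; exact hP5mem) (by rw [tc1']; exact hP5not)
  have h13 : L 2 P6 < L 0 P6 := h 0 2 (by decide) P6 (by rw [tc0']; exact hP6mem) (by rw [tc2']; exact hP6not)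
  have h31 : L 0 P7 < L 2 P7 := h 2 0 (by decide) P7 (by rw [tc2']; exact hP7mem) (by rw [tc0']; exact hP7not)
  have k10 := key1 (L 0); have k11 := key1 (L 1)
  have k21 := key2 (L 1); have k22 := key2 (L 2)
  nlinarith [mul_lt_mul_of_pos_left h12 (show (0:ℚ) < 36515 by norm_num),
    mul_lt_mul_of_pos_left h21 (show (0:ℚ) < 24723 by norm_num),
    mul_lt_mul_of_pos_left h23 (show (0:ℚ) < 59405 by norm_num),
    mul_lt_mul_of_pos_left h23' (show (0:ℚ) < 23673 by norm_num),
    mul_lt_mul_of_pos_left h32 (show (0:ℚ) < 40221 by norm_num),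
    mul_lt_mul_of_pos_left h13 (show (0:ℚ) < 29748 by norm_num),
    mul_lt_mul_of_pos_left h31 (show (0:ℚ) < 22445 by norm_num)]

lemma not_subset (i j : Fin 3) (hij : i ≠ j) : ¬ threeCones i ⊆ threeCones j := by
  fin_cases i <;> fin_cases j <;> simp_all <;> intro hs
  · exact (tc1' ▸ hP1not) (hs (tc0' ▸ hP1mem))
  · exact (tc2' ▸ hP6not) (hs (tc0' ▸ hP6mem))
  · exact (tc0' ▸ hP2not) (hs (tc1' ▸ hP2mem))
  · exact (tc2' ▸ hP3not) (hs (tc1' ▸ hP3mem))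
  · exact (tc0' ▸ hP7not) (hs (tc2' ▸ hP7mem))
  · exact (tc1' ▸ hP5not) (hs (tc2' ▸ hP5mem))

lemma faceOf_subset {F C : Set (Fin 3 → ℚ)} (h : IsFaceOf F C) : F ⊆ C := by
  obtain ⟨l, _, rfl⟩ := h; exact Set.inter_subset_left

lemma mem_fanSigma (i : Fin 3) : threeCones i ∈ fanSigma := by
  left; fin_cases i <;> simp [threeCones]

lemma fan_mem_sub {C : Set (Fin 3 → ℚ)} (hC : C ∈ fanSigma) :
    ∃ j : Fin 3, C ⊆ threeCones j := by
  rcases hC with h | h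
  · rcases h with h | h | h
    · exact ⟨0, h ▸ subset_rfl⟩
    · exact ⟨1, h ▸ subset_rfl⟩
    · exact ⟨2, (Set.mem_singleton_iff.mp h) ▸ subset_rfl⟩
  · rcases h with h | h | h
    · exact ⟨0, faceOf_subset h⟩
    · exact ⟨1, faceOf_subset h⟩
    · exact ⟨2, faceOf_subset h⟩

lemma maximal (i : Fin 3) : IsMaximalIn fanSigma (threeCones i) := by
  refine ⟨mem_fanSigma i, fun C' hC' hsub => ?_⟩
  obtain ⟨j, hj⟩ := fan_mem_sub hC'
  have hij : i = j := by
    by_contra hne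
    exact not_subset i j hne (hsub.trans hj)
  subst hij
  exact Set.Subset.antisymm hj hsub

lemma tc_injective (i j : Fin 3) (hij : i ≠ j) : threeCones i ≠ threeCones j :=
  fun h => not_subset i j hij (h ▸ subset_rfl)

end Facts

/-- The fan `Σ` is not quasi-projective: there is no family
`(l₁, l₂, l₃)` of linear forms on `ℚ³`, indexed by the maximal cones
`σ₁ = σ`, `σ₂ = ε(σ)`, `σ₃ = ε²(σ)`, with `lᵢ = lⱼ` on `σᵢ ∩ σⱼ` for all `i, j`
and `lᵢ(x) > lⱼ(x)` for all `i ≠ j` and every `x ∈ σᵢ` with `x ∉ σⱼ`. -/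
theorem fanSigma_not_quasiProjective :
    ¬ IsQuasiProjectiveFan fanSigma ∧
    ¬ ∃ l : Fin 3 → ((Fin 3 → ℚ) →ₗ[ℚ] ℚ),
        (∀ i j : Fin 3, ∀ x ∈ threeCones i ∩ threeCones j, l i x = l j x) ∧
        (∀ i j : Fin 3, i ≠ j → ∀ x ∈ threeCones i, x ∉ threeCones j →
          l j x < l i x) := by
  constructor
  · rintro ⟨l, -, hlt⟩
    exact core (fun i => l (threeCones i)) fun i j hij x hx hnx =>
      hlt (threeCones i) (maximal i) (threeCones j) (maximal j) (tc_injective i j hij) x hx hnx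
  · rintro ⟨l, -, hlt⟩
    exact core l hlt
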